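/- (Four activation units suffice to approximate a product.) Let σ : ℝ → ℝ be twice continuously differentiable at 0 (ContDiffAt ℝ 2 σ 0) with second derivative σ''(0) ≠ 0. Then for all x, y ∈ ℝ, the expression (σ(a(x+y)) + σ(-a(x+y)) - σ(a(x-y)) - σ(-a(x-y))) / (4 a² σ''(0)) tends to x·y as a tends to 0 with a ≠ 0. Hence the monomial x·y can be approximated to any desired accuracy by a linear combination of 4 activation units. -/

import Mathlib

open Filter Topology Set

/-- The symmetric second-difference quotient tends to the second derivative. -/
lemma symm_second_diff_tendsto (σ : ℝ → ℝ) (hσ : ContDiffAt ℝ 2 σ 0) :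
    Filter.Tendsto (fun t : ℝ => (σ t + σ (-t) - 2 * σ 0) / t ^ 2) (𝓝[≠] (0:ℝ))
      (𝓝 (iteratedDeriv 2 σ 0)) := by
  obtain ⟨u, hu, hcd⟩ := hσ.contDiffOn le_rfl (by simp)
  obtain ⟨ε, hε, hball⟩ := Metric.nhds_basis_ball.mem_iff.1 hu
  set B := Metric.ball (0:ℝ) ε with hB
  have h0B : (0:ℝ) ∈ B := Metric.mem_ball_self hε
  have hBopen : IsOpen B := Metric.isOpen_ball
  have hcdB : ContDiffOn ℝ 2 σ B := hcd.mono hball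
  have hdiffB : DifferentiableOn ℝ σ B := hcdB.differentiableOn (by norm_num)
  have hcd1 : ContDiffOn ℝ 1 (deriv σ) B :=
    hcdB.deriv_of_isOpen hBopen (by norm_num)
  have hderiv2 : HasDerivAt (deriv σ) (iteratedDeriv 2 σ 0) 0 := by
    have := (hcd1.differentiableOn (by norm_num)).differentiableAt
      (hBopen.mem_nhds h0B)
    rw [show (2:ℕ) = 1 + 1 from rfl, iteratedDeriv_succ, iteratedDeriv_one]
    exact this.hasDerivAt
  -- slope convergence of deriv σ at 0
  have hslope : Tendsto (fun t : ℝ => (deriv σ t - deriv σ 0) / t) (𝓝[≠] (0:ℝ))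
      (𝓝 (iteratedDeriv 2 σ 0)) := by
    have := hasDerivAt_iff_tendsto_slope.1 hderiv2
    refine this.congr fun t => ?_
    simp [slope_def_field, div_eq_inv_mul]
  have hnegmem : ∀ t ∈ B, -t ∈ B := by
    intro t ht
    simpa [hB, Real.dist_eq, abs_neg] using ht
  -- L'Hôpital setup
  have hBev : ∀ᶠ t in 𝓝[≠] (0:ℝ), t ∈ B :=
    eventually_nhdsWithin_of_eventually_nhds (hBopen.eventually_mem h0B)
  have hff' : ∀ᶠ t in 𝓝[≠] (0:ℝ),
      HasDerivAt (fun s => σ s + σ (-s) - 2 * σ 0)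
        (deriv σ t - deriv σ (-t)) t := by
    filter_upwards [hBev] with t ht
    have h1 : HasDerivAt σ (deriv σ t) t :=
      (hdiffB.differentiableAt (hBopen.mem_nhds ht)).hasDerivAt
    have h2 : HasDerivAt σ (deriv σ (-t)) (-t) :=
      (hdiffB.differentiableAt (hBopen.mem_nhds (hnegmem t ht))).hasDerivAt
    have h3 : HasDerivAt (fun s : ℝ => σ (-s)) (deriv σ (-t) * (-1)) t :=
      h2.comp t (hasDerivAt_neg t)
    have := (h1.add h3).sub_const (2 * σ 0)
    rw [show deriv σ t - deriv σ (-t) = deriv σ t + deriv σ (-t) * (-1) by ring]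
    exact this
  have hgg' : ∀ᶠ t in 𝓝[≠] (0:ℝ), HasDerivAt (fun s : ℝ => s ^ 2) (2 * t) t := by
    filter_upwards with t
    simpa using hasDerivAt_pow 2 t
  have hg' : ∀ᶠ t in 𝓝[≠] (0:ℝ), 2 * t ≠ 0 := by
    filter_upwards [self_mem_nhdsWithin] with t ht
    simp only [mem_compl_iff, mem_singleton_iff] at ht
    exact mul_ne_zero two_ne_zero ht
  have hcont : ContinuousAt σ 0 := hσ.continuousAt
  have hneg0 : Tendsto (fun s : ℝ => -s) (𝓝 (0:ℝ)) (𝓝 (0:ℝ)) := by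
    simpa using (continuous_neg.tendsto (0:ℝ))
  have hfa : Tendsto (fun s => σ s + σ (-s) - 2 * σ 0) (𝓝[≠] (0:ℝ)) (𝓝 0) := by
    have h2 : Tendsto (fun s : ℝ => σ s + σ (-s) - 2 * σ 0) (𝓝 (0:ℝ))
        (𝓝 (σ 0 + σ 0 - 2 * σ 0)) :=
      (hcont.tendsto.add (hcont.tendsto.comp hneg0)).sub tendsto_const_nhds
    have h0 : σ 0 + σ 0 - 2 * σ 0 = 0 := by ring
    rw [h0] at h2
    exact h2.mono_left nhdsWithin_le_nhds
  have hga : Tendsto (fun s : ℝ => s ^ 2) (𝓝[≠] (0:ℝ)) (𝓝 0) := by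
    have : Tendsto (fun s : ℝ => s ^ 2) (𝓝 (0:ℝ)) (𝓝 ((0:ℝ) ^ 2)) :=
      (continuous_pow 2).continuousAt
    simpa using this.mono_left nhdsWithin_le_nhds
  have hnegt : Tendsto (fun t : ℝ => -t) (𝓝[≠] (0:ℝ)) (𝓝[≠] (0:ℝ)) := by
    refine tendsto_nhdsWithin_of_tendsto_nhds_of_eventually_within _ ?_ ?_
    · exact hneg0.mono_left nhdsWithin_le_nhds
    · filter_upwards [self_mem_nhdsWithin] with t ht
      simp only [mem_compl_iff, mem_singleton_iff] at ht ⊢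
      exact neg_ne_zero.2 ht
  have hdiv : Tendsto (fun t => (deriv σ t - deriv σ (-t)) / (2 * t)) (𝓝[≠] (0:ℝ))
      (𝓝 (iteratedDeriv 2 σ 0)) := by
    have hslope' : Tendsto (fun t : ℝ => (deriv σ (-t) - deriv σ 0) / (-t))
        (𝓝[≠] (0:ℝ)) (𝓝 (iteratedDeriv 2 σ 0)) := hslope.comp hnegt
    have := (hslope.add hslope').div_const 2
    have key : Tendsto
        (fun t : ℝ => ((deriv σ t - deriv σ 0) / t + (deriv σ (-t) - deriv σ 0) / (-t)) / 2)
        (𝓝[≠] (0:ℝ)) (𝓝 (iteratedDeriv 2 σ 0)) := by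
      convert this using 2
      ring
    refine key.congr' ?_
    filter_upwards [self_mem_nhdsWithin] with t ht
    simp only [mem_compl_iff, mem_singleton_iff] at ht
    have ht' : -t ≠ 0 := neg_ne_zero.mpr ht
    rw [div_add_div _ _ ht ht', div_div,
      div_eq_div_iff (mul_ne_zero (mul_ne_zero ht ht') two_ne_zero)
        (mul_ne_zero two_ne_zero ht)]
    ring
  exact HasDerivAt.lhopital_zero_nhdsNE hff' hgg' hg' hfa hga hdiv

/-- Scaled version of the symmetric second-difference limit. -/
lemma symm_second_diff_scaled (σ : ℝ → ℝ) (hσ : ContDiffAt ℝ 2 σ 0) (c : ℝ) :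
    Filter.Tendsto (fun a : ℝ => (σ (a * c) + σ (-(a * c)) - 2 * σ 0) / a ^ 2)
      (𝓝[≠] (0:ℝ)) (𝓝 (iteratedDeriv 2 σ 0 * c ^ 2)) := by
  rcases eq_or_ne c 0 with rfl | hc
  · have heq : (fun a : ℝ => (σ (a * 0) + σ (-(a * 0)) - 2 * σ 0) / a ^ 2) =
        fun _ : ℝ => (0:ℝ) := by
      funext a
      rw [mul_zero, neg_zero, show σ 0 + σ 0 - 2 * σ 0 = 0 by ring, zero_div]
    rw [heq]
    simp
  · have hmul : Tendsto (fun a : ℝ => a * c) (𝓝[≠] (0:ℝ)) (𝓝[≠] (0:ℝ)) := by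
      refine tendsto_nhdsWithin_of_tendsto_nhds_of_eventually_within _ ?_ ?_
      · have : Tendsto (fun a : ℝ => a * c) (𝓝 (0:ℝ)) (𝓝 (0 * c)) :=
          (continuous_mul_right c).continuousAt
        simpa using this.mono_left nhdsWithin_le_nhds
      · filter_upwards [self_mem_nhdsWithin] with a ha
        simp only [mem_compl_iff, mem_singleton_iff] at ha ⊢
        exact mul_ne_zero ha hc
    have := ((symm_second_diff_tendsto σ hσ).comp hmul).mul_const (c ^ 2)
    refine this.congr' ?_
    filter_upwards [self_mem_nhdsWithin] with a ha
    simp only [mem_compl_iff, mem_singleton_iff] at ha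
    simp only [Function.comp]
    field_simp

/-- Four activation units suffice to approximate the product `x * y`: for an activation
`σ` twice continuously differentiable at `0` with `σ''(0) ≠ 0`, the combination
`(σ(a(x+y)) + σ(-a(x+y)) - σ(a(x-y)) - σ(-a(x-y))) / (4 a² σ''(0))` tends to `x * y`
as `a → 0`, `a ≠ 0`. -/
theorem four_units_approximate_product (σ : ℝ → ℝ)
    (hσ : ContDiffAt ℝ 2 σ 0) (hσ'' : iteratedDeriv 2 σ 0 ≠ 0) (x y : ℝ) :
    Filter.Tendsto
      (fun a : ℝ =>
        (σ (a * (x + y)) + σ (-(a * (x + y))) - σ (a * (x - y)) - σ (-(a * (x - y)))) /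
          (4 * a ^ 2 * iteratedDeriv 2 σ 0))
      (nhdsWithin 0 {0}ᶜ) (nhds (x * y)) := by
  have h1 := symm_second_diff_scaled σ hσ (x + y)
  have h2 := symm_second_diff_scaled σ hσ (x - y)
  have key := ((h1.sub h2).div_const (4 * iteratedDeriv 2 σ 0))
  have hval : (iteratedDeriv 2 σ 0 * (x + y) ^ 2 - iteratedDeriv 2 σ 0 * (x - y) ^ 2) /
      (4 * iteratedDeriv 2 σ 0) = x * y := by
    field_simp
    ring
  rw [hval] at key
  refine key.congr' ?_
  filter_upwards [self_mem_nhdsWithin] with a ha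
  simp only [mem_compl_iff, mem_singleton_iff] at ha
  have ha2 : a ^ 2 ≠ 0 := pow_ne_zero 2 ha
  field_simp
  ring
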